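/- Let Y be a real n×p matrix and let ξ(Y) be the (n+p)×(n+p) matrix [[0, Y],[ᵀY, 0]]. Then the matrix exponential exp(ξ(Y)) has block form [[Σ_{k≥0} (Y·ᵀY)^k/(2k)!, Σ_{k≥0} (Y·ᵀY)^k·Y/(2k+1)!],[Σ_{k≥0} (ᵀY·Y)^k·ᵀY/(2k+1)!, Σ_{k≥0} (ᵀY·Y)^k/(2k)!]]. -/

import Mathlib

open Matrix

set_option maxHeartbeats 1000000

private lemma fromBlocks_add_collapse {n p : ℕ}
    (A : Matrix (Fin n) (Fin n) ℝ) (B : Matrix (Fin n) (Fin p) ℝ)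
    (C : Matrix (Fin p) (Fin n) ℝ) (D : Matrix (Fin p) (Fin p) ℝ) :
    fromBlocks A 0 0 0 + fromBlocks 0 B 0 0 + fromBlocks 0 0 C 0 + fromBlocks 0 0 0 D =
      fromBlocks A B C D := by
  rw [fromBlocks_add, fromBlocks_add, fromBlocks_add]
  simp

private lemma hasSum_fromBlocks' {n p : ℕ}
    {f₁ : ℕ → Matrix (Fin n) (Fin n) ℝ} {f₂ : ℕ → Matrix (Fin n) (Fin p) ℝ}
    {f₃ : ℕ → Matrix (Fin p) (Fin n) ℝ} {f₄ : ℕ → Matrix (Fin p) (Fin p) ℝ}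
    {a₁ a₂ a₃ a₄} (h₁ : HasSum f₁ a₁) (h₂ : HasSum f₂ a₂)
    (h₃ : HasSum f₃ a₃) (h₄ : HasSum f₄ a₄) :
    HasSum (fun k => fromBlocks (f₁ k) (f₂ k) (f₃ k) (f₄ k))
      (fromBlocks a₁ a₂ a₃ a₄) := by
  have c₁ : Continuous fun A : Matrix (Fin n) (Fin n) ℝ =>
      fromBlocks A (0 : Matrix (Fin n) (Fin p) ℝ) (0 : Matrix (Fin p) (Fin n) ℝ)
        (0 : Matrix (Fin p) (Fin p) ℝ) :=
    Continuous.matrix_fromBlocks continuous_id continuous_const continuous_const continuous_const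
  have c₂ : Continuous fun A : Matrix (Fin n) (Fin p) ℝ =>
      fromBlocks (0 : Matrix (Fin n) (Fin n) ℝ) A (0 : Matrix (Fin p) (Fin n) ℝ)
        (0 : Matrix (Fin p) (Fin p) ℝ) :=
    Continuous.matrix_fromBlocks continuous_const continuous_id continuous_const continuous_const
  have c₃ : Continuous fun A : Matrix (Fin p) (Fin n) ℝ =>
      fromBlocks (0 : Matrix (Fin n) (Fin n) ℝ) (0 : Matrix (Fin n) (Fin p) ℝ) A
        (0 : Matrix (Fin p) (Fin p) ℝ) :=
    Continuous.matrix_fromBlocks continuous_const continuous_const continuous_id continuous_const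
  have c₄ : Continuous fun A : Matrix (Fin p) (Fin p) ℝ =>
      fromBlocks (0 : Matrix (Fin n) (Fin n) ℝ) (0 : Matrix (Fin n) (Fin p) ℝ)
        (0 : Matrix (Fin p) (Fin n) ℝ) A :=
    Continuous.matrix_fromBlocks continuous_const continuous_const continuous_const continuous_id
  have m₁ := h₁.map (AddMonoidHom.mk'
    (fun A : Matrix (Fin n) (Fin n) ℝ => fromBlocks A (0 : Matrix (Fin n) (Fin p) ℝ)
      (0 : Matrix (Fin p) (Fin n) ℝ) (0 : Matrix (Fin p) (Fin p) ℝ))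
    (fun a b => by rw [fromBlocks_add]; simp)) c₁
  have m₂ := h₂.map (AddMonoidHom.mk'
    (fun A : Matrix (Fin n) (Fin p) ℝ => fromBlocks (0 : Matrix (Fin n) (Fin n) ℝ) A
      (0 : Matrix (Fin p) (Fin n) ℝ) (0 : Matrix (Fin p) (Fin p) ℝ))
    (fun a b => by rw [fromBlocks_add]; simp)) c₂
  have m₃ := h₃.map (AddMonoidHom.mk'
    (fun A : Matrix (Fin p) (Fin n) ℝ => fromBlocks (0 : Matrix (Fin n) (Fin n) ℝ)
      (0 : Matrix (Fin n) (Fin p) ℝ) A (0 : Matrix (Fin p) (Fin p) ℝ))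
    (fun a b => by rw [fromBlocks_add]; simp)) c₃
  have m₄ := h₄.map (AddMonoidHom.mk'
    (fun A : Matrix (Fin p) (Fin p) ℝ => fromBlocks (0 : Matrix (Fin n) (Fin n) ℝ)
      (0 : Matrix (Fin n) (Fin p) ℝ) (0 : Matrix (Fin p) (Fin n) ℝ) A)
    (fun a b => by rw [fromBlocks_add]; simp)) c₄
  have htot := ((m₁.add m₂).add m₃).add m₄
  have h' : HasSum (fun k => fromBlocks (f₁ k) 0 0 0 + fromBlocks 0 (f₂ k) 0 0 +
      fromBlocks 0 0 (f₃ k) 0 + fromBlocks 0 0 0 (f₄ k))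
      (fromBlocks a₁ 0 0 0 + fromBlocks 0 a₂ 0 0 + fromBlocks 0 0 a₃ 0 +
        fromBlocks 0 0 0 a₄) := htot
  simpa only [fromBlocks_add_collapse] using h'

/-- Block form of the matrix exponential of `ξ(Y) = [[0, Y],[ᵀY, 0]]`. -/
theorem stmt_15 (n p : ℕ) (Y : Matrix (Fin n) (Fin p) ℝ) :
    NormedSpace.exp (fromBlocks (0 : Matrix (Fin n) (Fin n) ℝ) Y Yᵀ
        (0 : Matrix (Fin p) (Fin p) ℝ)) =
      fromBlocks
        (∑' k : ℕ, ((Nat.factorial (2 * k) : ℝ))⁻¹ • (Y * Yᵀ) ^ k)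
        (∑' k : ℕ, ((Nat.factorial (2 * k + 1) : ℝ))⁻¹ • ((Y * Yᵀ) ^ k * Y))
        (∑' k : ℕ, ((Nat.factorial (2 * k + 1) : ℝ))⁻¹ • ((Yᵀ * Y) ^ k * Yᵀ))
        (∑' k : ℕ, ((Nat.factorial (2 * k) : ℝ))⁻¹ • (Yᵀ * Y) ^ k) := by
  letI : SeminormedRing (Matrix (Fin n ⊕ Fin p) (Fin n ⊕ Fin p) ℝ) :=
    Matrix.linftyOpSemiNormedRing
  letI : NormedRing (Matrix (Fin n ⊕ Fin p) (Fin n ⊕ Fin p) ℝ) :=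
    Matrix.linftyOpNormedRing
  letI : NormedAlgebra ℝ (Matrix (Fin n ⊕ Fin p) (Fin n ⊕ Fin p) ℝ) :=
    Matrix.linftyOpNormedAlgebra
  set M : Matrix (Fin n ⊕ Fin p) (Fin n ⊕ Fin p) ℝ :=
    fromBlocks 0 Y Yᵀ 0 with hMdef
  have hM2 : M ^ 2 = fromBlocks (Y * Yᵀ) 0 0 (Yᵀ * Y) := by
    rw [sq, hMdef, fromBlocks_multiply]; simp
  have hpe : ∀ k : ℕ, M ^ (2 * k) = fromBlocks ((Y * Yᵀ) ^ k) 0 0 ((Yᵀ * Y) ^ k) := by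
    intro k
    induction k with
    | zero => simp [← fromBlocks_one]
    | succ k ih =>
      rw [Nat.mul_succ, pow_add, ih, hM2, fromBlocks_multiply]
      simp [← pow_succ]
  have hpo : ∀ k : ℕ, M ^ (2 * k + 1) =
      fromBlocks 0 ((Y * Yᵀ) ^ k * Y) ((Yᵀ * Y) ^ k * Yᵀ) 0 := by
    intro k
    rw [pow_succ, hpe, hMdef, fromBlocks_multiply]
    simp
  have hsum : Summable (fun N : ℕ => ((N.factorial : ℝ))⁻¹ • M ^ N) :=
    NormedSpace.expSeries_summable' (𝕂 := ℝ) M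
  have he : Summable (fun k : ℕ => (((2 * k).factorial : ℝ))⁻¹ • M ^ (2 * k)) :=
    hsum.comp_injective (fun a b h => by omega)
  have ho : Summable (fun k : ℕ => (((2 * k + 1).factorial : ℝ))⁻¹ • M ^ (2 * k + 1)) :=
    hsum.comp_injective (fun a b h => by omega)
  -- blockwise summability, extracted via continuous additive maps
  have h11 : Summable (fun k : ℕ => (((2 * k).factorial : ℝ))⁻¹ • (Y * Yᵀ) ^ k) := by
    have := he.map ((AddMonoidHom.mk' (fun A => A.toBlocks₁₁) (fun a b => rfl) : Matrix (Fin n ⊕ Fin p) (Fin n ⊕ Fin p) ℝ →+ Matrix (Fin n) (Fin n) ℝ))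
      (continuous_matrix fun i j => (continuous_apply (Sum.inl j)).comp (continuous_apply (Sum.inl i)))
    refine this.congr fun k => ?_
    simp [Function.comp, hpe, fromBlocks_smul, toBlocks_fromBlocks₁₁, AddMonoidHom.mk'_apply]
    rfl
  have h22 : Summable (fun k : ℕ => (((2 * k).factorial : ℝ))⁻¹ • (Yᵀ * Y) ^ k) := by
    have := he.map ((AddMonoidHom.mk' (fun A => A.toBlocks₂₂) (fun a b => rfl) : Matrix (Fin n ⊕ Fin p) (Fin n ⊕ Fin p) ℝ →+ Matrix (Fin p) (Fin p) ℝ))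
      (continuous_matrix fun i j => (continuous_apply (Sum.inr j)).comp (continuous_apply (Sum.inr i)))
    refine this.congr fun k => ?_
    simp [Function.comp, hpe, fromBlocks_smul, toBlocks_fromBlocks₂₂, AddMonoidHom.mk'_apply]
    rfl
  have h12 : Summable (fun k : ℕ => (((2 * k + 1).factorial : ℝ))⁻¹ • ((Y * Yᵀ) ^ k * Y)) := by
    have := ho.map ((AddMonoidHom.mk' (fun A => A.toBlocks₁₂) (fun a b => rfl) : Matrix (Fin n ⊕ Fin p) (Fin n ⊕ Fin p) ℝ →+ Matrix (Fin n) (Fin p) ℝ))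
      (continuous_matrix fun i j => (continuous_apply (Sum.inr j)).comp (continuous_apply (Sum.inl i)))
    refine this.congr fun k => ?_
    simp [Function.comp, hpo, fromBlocks_smul, toBlocks_fromBlocks₁₂, AddMonoidHom.mk'_apply]
    rfl
  have h21 : Summable (fun k : ℕ => (((2 * k + 1).factorial : ℝ))⁻¹ • ((Yᵀ * Y) ^ k * Yᵀ)) := by
    have := ho.map ((AddMonoidHom.mk' (fun A => A.toBlocks₂₁) (fun a b => rfl) : Matrix (Fin n ⊕ Fin p) (Fin n ⊕ Fin p) ℝ →+ Matrix (Fin p) (Fin n) ℝ))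
      (continuous_matrix fun i j => (continuous_apply (Sum.inl j)).comp (continuous_apply (Sum.inr i)))
    refine this.congr fun k => ?_
    simp [Function.comp, hpo, fromBlocks_smul, toBlocks_fromBlocks₂₁, AddMonoidHom.mk'_apply]
    rfl
  have heven : HasSum (fun k : ℕ => (((2 * k).factorial : ℝ))⁻¹ • M ^ (2 * k))
      (fromBlocks (∑' k : ℕ, (((2 * k).factorial : ℝ))⁻¹ • (Y * Yᵀ) ^ k) 0 0
        (∑' k : ℕ, (((2 * k).factorial : ℝ))⁻¹ • (Yᵀ * Y) ^ k)) := by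
    have hfun : (fun k : ℕ => (((2 * k).factorial : ℝ))⁻¹ • M ^ (2 * k)) =
        fun k : ℕ => fromBlocks ((((2 * k).factorial : ℝ))⁻¹ • (Y * Yᵀ) ^ k) 0 0
          ((((2 * k).factorial : ℝ))⁻¹ • (Yᵀ * Y) ^ k) := by
      funext k; rw [hpe, fromBlocks_smul]; simp
    rw [hfun]
    exact hasSum_fromBlocks' h11.hasSum hasSum_zero hasSum_zero h22.hasSum
  have hodd : HasSum (fun k : ℕ => (((2 * k + 1).factorial : ℝ))⁻¹ • M ^ (2 * k + 1))
      (fromBlocks 0 (∑' k : ℕ, (((2 * k + 1).factorial : ℝ))⁻¹ • ((Y * Yᵀ) ^ k * Y))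
        (∑' k : ℕ, (((2 * k + 1).factorial : ℝ))⁻¹ • ((Yᵀ * Y) ^ k * Yᵀ)) 0) := by
    have hfun : (fun k : ℕ => (((2 * k + 1).factorial : ℝ))⁻¹ • M ^ (2 * k + 1)) =
        fun k : ℕ => fromBlocks 0 ((((2 * k + 1).factorial : ℝ))⁻¹ • ((Y * Yᵀ) ^ k * Y))
          ((((2 * k + 1).factorial : ℝ))⁻¹ • ((Yᵀ * Y) ^ k * Yᵀ)) 0 := by
      funext k; rw [hpo, fromBlocks_smul]; simp
    rw [hfun]
    exact hasSum_fromBlocks' hasSum_zero h12.hasSum h21.hasSum hasSum_zero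
  have hexp : HasSum (fun N : ℕ => ((N.factorial : ℝ))⁻¹ • M ^ N)
      (NormedSpace.exp M) := NormedSpace.exp_series_hasSum_exp' (𝕂 := ℝ) M
  have H := HasSum.even_add_odd (f := fun N : ℕ => ((N.factorial : ℝ))⁻¹ • M ^ N) heven hodd
  rw [hexp.unique H, fromBlocks_add]
  simp
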